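/- arXiv:2511.12815 — 9 statements merged into one kernel-verified Lean document; each statement's English description precedes it below -/
import Mathlib

section
/- If R is a totally ordered commutative Noetherian ring, then S = R_{≥0} is k-Noetherian: every k-ideal of S is finitely generated as a k-ideal. Moreover, if an ideal I of R is generated by a set D, then the k-ideal I ∩ S of S is generated as a k-ideal by {|x| : x ∈ D}. -/
/-- A k-ideal `J` of a semiring is the k-ideal generated by a set `T` if it is the
smallest k-ideal containing `T`. -/
def IsKIdealGeneratedBy {S : Type*} [CommSemiring S] (J : Ideal S) (T : Set S) : Prop :=
  (∀ x y : S, x ∈ J → x + y ∈ J → y ∈ J) ∧ T ⊆ (J : Set S) ∧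
    ∀ J' : Ideal S, (∀ x y : S, x ∈ J' → x + y ∈ J' → y ∈ J') →
      T ⊆ (J' : Set S) → J ≤ J'

section Aux
variable {R : Type*} [CommRing R] [LinearOrder R] [IsStrictOrderedRing R]

lemma key_kideal (D : Set R) (J : Ideal {x : R // 0 ≤ x})
    (hJ : ∀ x : {x : R // 0 ≤ x}, x ∈ J ↔ (x : R) ∈ Ideal.span D) :
    IsKIdealGeneratedBy J {x : {x : R // 0 ≤ x} | ∃ d ∈ D, (x : R) = |d|} := by
  refine ⟨?_, ?_, ?_⟩
  · intro x y hx hxy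
    rw [hJ] at hx hxy ⊢
    have hy : (y : R) = ((x + y : {x : R // 0 ≤ x}) : R) - (x : R) := by push_cast; ring
    rw [hy]
    exact sub_mem hxy hx
  · rintro x ⟨d, hd, hx⟩
    rw [SetLike.mem_coe, hJ, hx]
    rcases abs_cases d with ⟨h, _⟩ | ⟨h, _⟩
    · rw [h]; exact Ideal.subset_span hd
    · rw [h]; exact neg_mem (Ideal.subset_span hd)
  · intro J' hk hT x hx
    have hx' := (hJ x).1 hx
    have main : ∀ r ∈ Ideal.span D,
        ∃ p n : {x : R // 0 ≤ x}, p ∈ J' ∧ n ∈ J' ∧ r = (p : R) - (n : R) := by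
      intro r hr
      induction hr using Submodule.span_induction with
      | mem d hd =>
        have habs : (⟨|d|, abs_nonneg d⟩ : {x : R // 0 ≤ x}) ∈ J' :=
          hT ⟨d, hd, rfl⟩
        rcases abs_cases d with ⟨h, _⟩ | ⟨h, _⟩
        · exact ⟨⟨|d|, abs_nonneg d⟩, 0, habs, zero_mem J', by simp [h]⟩
        · exact ⟨0, ⟨|d|, abs_nonneg d⟩, zero_mem J', habs, by simp [h]⟩
      | zero => exact ⟨0, 0, zero_mem J', zero_mem J', by simp⟩
      | add u v _ _ hu hv =>
        obtain ⟨p1, n1, hp1, hn1, h1⟩ := hu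
        obtain ⟨p2, n2, hp2, hn2, h2⟩ := hv
        exact ⟨p1 + p2, n1 + n2, add_mem hp1 hp2, add_mem hn1 hn2, by push_cast; linarith⟩
      | smul a u _ hu =>
        obtain ⟨p, n, hp, hn, h⟩ := hu
        set ap : {x : R // 0 ≤ x} := ⟨max a 0, le_max_right _ _⟩ with hap
        set an : {x : R // 0 ≤ x} := ⟨max (-a) 0, le_max_right _ _⟩ with han
        have hAB : (ap : R) - (an : R) = a := by
          rcases le_total a 0 with h' | h'
          · simp [hap, han, max_eq_right h', max_eq_left (neg_nonneg.mpr h')]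
          · simp [hap, han, max_eq_left h', max_eq_right (neg_nonpos.mpr h')]
        refine ⟨ap * p + an * n, ap * n + an * p,
          add_mem (Ideal.mul_mem_left _ _ hp) (Ideal.mul_mem_left _ _ hn),
          add_mem (Ideal.mul_mem_left _ _ hn) (Ideal.mul_mem_left _ _ hp), ?_⟩
        rw [smul_eq_mul, h]
        push_cast
        linear_combination ((n : R) - (p : R)) * hAB
    obtain ⟨p, n, hp, hn, hpn⟩ := main x hx'
    have heq : n + x = p := by
      apply Subtype.ext
      push_cast
      linarith
    exact hk n x hn (by rw [heq]; exact hp)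

end Aux

/-- If `R` is a totally ordered commutative Noetherian ring, then `S = R_{≥0}` is
k-Noetherian: every k-ideal of `S` is finitely generated as a k-ideal. Moreover, if
an ideal `I` of `R` is generated by a set `D`, then the k-ideal `I ∩ S` is
generated as a k-ideal by `{|x| : x ∈ D}`. -/
theorem stmt_8 (R : Type*) [CommRing R] [LinearOrder R] [IsStrictOrderedRing R] [IsNoetherianRing R] :
    (∀ J : Ideal {x : R // 0 ≤ x},
      (∀ x y : {x : R // 0 ≤ x}, x ∈ J → x + y ∈ J → y ∈ J) →
      ∃ T : Finset {x : R // 0 ≤ x}, IsKIdealGeneratedBy J (T : Set {x : R // 0 ≤ x})) ∧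
    (∀ (D : Set R) (J : Ideal {x : R // 0 ≤ x}),
      (∀ x : {x : R // 0 ≤ x}, x ∈ J ↔ (x : R) ∈ Ideal.span D) →
      IsKIdealGeneratedBy J {x : {x : R // 0 ≤ x} | ∃ d ∈ D, (x : R) = |d|}) := by
  constructor
  · intro J hk
    set D0 : Set R := (↑) '' (J : Set {x : R // 0 ≤ x}) with hD0
    set I : Ideal R := Ideal.span D0 with hI
    -- the ideal of nonneg elements of I
    set J₀ : Ideal {x : R // 0 ≤ x} :=
      { carrier := {x | (x : R) ∈ I}
        add_mem' := fun {a b} ha hb => by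
          simp only [Set.mem_setOf_eq] at *
          have : ((a + b : {x : R // 0 ≤ x}) : R) = (a : R) + b := by push_cast; ring
          rw [this]; exact add_mem ha hb
        zero_mem' := by simp only [Set.mem_setOf_eq]; norm_cast; exact zero_mem I
        smul_mem' := fun c x hx => by
          simp only [Set.mem_setOf_eq] at *
          have : ((c • x : {x : R // 0 ≤ x}) : R) = (c : R) * x := by
            rw [smul_eq_mul]; push_cast; ring
          rw [this]; exact Ideal.mul_mem_left _ _ hx } with hJ₀def
    have hJ₀ : ∀ x : {x : R // 0 ≤ x}, x ∈ J₀ ↔ (x : R) ∈ Ideal.span D0 := fun x => Iff.rfl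
    have hgen := key_kideal D0 J₀ hJ₀
    have hJJ₀ : J = J₀ := by
      apply le_antisymm
      · intro x hx
        exact Ideal.subset_span ⟨x, hx, rfl⟩
      · refine hgen.2.2 J hk ?_
        rintro x ⟨d, ⟨j, hj, rfl⟩, hx⟩
        have : x = j := Subtype.ext (by rw [hx, abs_of_nonneg j.2])
        rwa [this]
    obtain ⟨F, hF⟩ := IsNoetherian.noetherian I
    have hJ' : ∀ x : {x : R // 0 ≤ x}, x ∈ J ↔ (x : R) ∈ Ideal.span (↑F : Set R) := by
      intro x
      rw [hJJ₀, hJ₀ x, ← hI, ← hF]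
    refine ⟨F.image (fun f => (⟨|f|, abs_nonneg f⟩ : {x : R // 0 ≤ x})), ?_⟩
    have hset : ((F.image (fun f => (⟨|f|, abs_nonneg f⟩ : {x : R // 0 ≤ x}))) :
        Set {x : R // 0 ≤ x}) = {x : {x : R // 0 ≤ x} | ∃ d ∈ (↑F : Set R), (x : R) = |d|} := by
      ext x
      simp only [Finset.coe_image, Set.mem_image, Finset.mem_coe, Set.mem_setOf_eq]
      constructor
      · rintro ⟨f, hf, rfl⟩
        exact ⟨f, hf, rfl⟩
      · rintro ⟨d, hd, hx⟩
        exact ⟨d, hd, Subtype.ext hx.symm⟩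
    rw [hset]
    exact key_kideal (↑F : Set R) J hJ'
  · exact fun D J hJ => key_kideal D J hJ
end

section
/- In the polynomial semiring B[X] over the Boolean semiring B = {0,1} (with 1 + 1 = 1), the congruence generated by all pairs (X^n + 1, X^m + 1) for n, m ≥ 1 is not finitely generated. -/
/-- The Boolean semifield `{0, 1}` with `1 + 1 = 1`. -/
def BoolSemifield : Type := Bool

namespace BoolSemifield

instance : DecidableEq BoolSemifield := instDecidableEqBool
instance : Fintype BoolSemifield := Bool.fintype
instance : Zero BoolSemifield := ⟨(false : Bool)⟩
instance : One BoolSemifield := ⟨(true : Bool)⟩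
instance : Add BoolSemifield := ⟨fun a b => (a || b : Bool)⟩
instance : Mul BoolSemifield := ⟨fun a b => (a && b : Bool)⟩

instance : CommSemiring BoolSemifield where
  add_assoc := by decide
  zero_add := by decide
  add_zero := by decide
  add_comm := by decide
  mul_assoc := by decide
  one_mul := by decide
  mul_one := by decide
  zero_mul := by decide
  mul_zero := by decide
  left_distrib := by decide
  right_distrib := by decide
  mul_comm := by decide
  nsmul := nsmulRec

end BoolSemifield

open Polynomial Pointwise

namespace NFGaux

abbrev B := BoolSemifield

lemma Badd (a b : B) : a + b = 0 ↔ a = 0 ∧ b = 0 := by revert a b; decide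
lemma Bmul (a b : B) : a * b = 0 ↔ a = 0 ∨ b = 0 := by revert a b; decide

lemma Bsum {α : Type*} (s : Finset α) (f : α → B) :
    (∑ i ∈ s, f i) = 0 ↔ ∀ i ∈ s, f i = 0 := by
  classical
  induction s using Finset.induction_on with
  | empty => simp
  | insert _ _ h ih =>
    rw [Finset.sum_insert h, Badd, ih]
    simp_all

/-- closure operator on supports -/
def cl (k : ℕ) (A : Set ℕ) : Set ℕ :=
  A ∪ {x | ∃ a ∈ A, ∃ b ∈ A, a < b ∧ b ≤ a + k ∧ a ≤ x}

lemma subset_cl (k : ℕ) (A : Set ℕ) : A ⊆ cl k A := Set.subset_union_left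

lemma cl_mono {A A' : Set ℕ} (h : A ⊆ A') (k : ℕ) : cl k A ⊆ cl k A' := by
  rintro x (hx | ⟨a, ha, b, hb, h1, h2, h3⟩)
  · exact Or.inl (h hx)
  · exact Or.inr ⟨a, h ha, b, h hb, h1, h2, h3⟩

lemma cl_idem (k : ℕ) (A : Set ℕ) : cl k (cl k A) = cl k A := by
  apply subset_antisymm _ (subset_cl _ _)
  rintro x (hx | ⟨a, ha, b, hb, hab, hbk, hax⟩)
  · exact hx
  · rcases ha with ha | ⟨c, hc, d, hd, h1, h2, h3⟩
    · rcases hb with hb | ⟨c, hc, d, hd, h1, h2, h3⟩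
      · exact Or.inr ⟨a, ha, b, hb, hab, hbk, hax⟩
      · rcases le_or_gt c a with hca | hca
        · exact Or.inr ⟨c, hc, d, hd, h1, h2, le_trans hca hax⟩
        · exact Or.inr ⟨a, ha, c, hc, hca, by omega, hax⟩
    · exact Or.inr ⟨c, hc, d, hd, h1, h2, le_trans h3 hax⟩

lemma cl_sandwich {k : ℕ} {A S : Set ℕ} (h1 : A ⊆ S) (h2 : S ⊆ cl k A) :
    cl k S = cl k A := by
  apply subset_antisymm
  · exact (cl_mono h2 k).trans (le_of_eq (cl_idem k A))
  · exact cl_mono h1 k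

lemma cl_union (k : ℕ) (A C : Set ℕ) :
    cl k (cl k A ∪ cl k C) = cl k (A ∪ C) := by
  apply cl_sandwich
  · exact Set.union_subset_union (subset_cl k A) (subset_cl k C)
  · exact Set.union_subset (cl_mono Set.subset_union_left k)
      (cl_mono Set.subset_union_right k)

lemma cl_add_subset (k : ℕ) (A C : Set ℕ) : cl k A + cl k C ⊆ cl k (A + C) := by
  rintro x ⟨y, hy, z, hz, rfl⟩
  show y + z ∈ cl k (A + C)
  rcases hy with hy | ⟨a, ha, b, hb, h1, h2, h3⟩
  · rcases hz with hz | ⟨c, hc, d, hd, g1, g2, g3⟩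
    · exact Or.inl ⟨y, hy, z, hz, rfl⟩
    · exact Or.inr ⟨y + c, ⟨y, hy, c, hc, rfl⟩, y + d, ⟨y, hy, d, hd, rfl⟩,
        by omega, by omega, by omega⟩
  · rcases hz with hz | ⟨c, hc, d, hd, g1, g2, g3⟩
    · exact Or.inr ⟨a + z, ⟨a, ha, z, hz, rfl⟩, b + z, ⟨b, hb, z, hz, rfl⟩,
        by omega, by omega, by omega⟩
    · exact Or.inr ⟨a + c, ⟨a, ha, c, hc, rfl⟩, b + c, ⟨b, hb, c, hc, rfl⟩,
        by omega, by omega, by omega⟩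

lemma cl_addset (k : ℕ) (A C : Set ℕ) :
    cl k (cl k A + cl k C) = cl k (A + C) := by
  apply cl_sandwich
  · exact Set.add_subset_add (subset_cl k A) (subset_cl k C)
  · exact cl_add_subset k A C

lemma cl_k_le {k k' : ℕ} (h : k ≤ k') (A : Set ℕ) : cl k A ⊆ cl k' A := by
  rintro x (hx | ⟨a, ha, b, hb, h1, h2, h3⟩)
  · exact Or.inl hx
  · exact Or.inr ⟨a, ha, b, hb, h1, by omega, h3⟩

lemma cl_stab {k k' : ℕ} (h : k ≤ k') {A A' : Set ℕ}
    (hAA : cl k A = cl k A') : cl k' A = cl k' A' := by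
  have e1 : cl k' (cl k A) = cl k' A := cl_sandwich (subset_cl k A) (cl_k_le h A)
  have e2 : cl k' (cl k A') = cl k' A' := cl_sandwich (subset_cl k A') (cl_k_le h A')
  rw [← e1, hAA, e2]

lemma supp_add (f g : Polynomial B) :
    ((f + g).support : Set ℕ) = ↑f.support ∪ ↑g.support := by
  ext n
  simp only [Finset.coe_union, Set.mem_union, Finset.mem_coe,
    Polynomial.mem_support_iff, Polynomial.coeff_add]
  constructor
  · intro h
    by_contra hc
    push_neg at hc
    rw [hc.1, hc.2] at h
    exact h (by decide)
  · intro h hc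
    rw [Badd] at hc
    tauto

lemma supp_mul (f g : Polynomial B) :
    ((f * g).support : Set ℕ) = ↑f.support + ↑g.support := by
  ext n
  simp only [Finset.mem_coe, Polynomial.mem_support_iff, Polynomial.coeff_mul,
    Set.mem_add, Ne, Bsum, not_forall]
  constructor
  · rintro ⟨x, hx, hne⟩
    rw [Bmul] at hne
    push_neg at hne
    exact ⟨x.1, by simpa [Polynomial.mem_support_iff] using hne.1,
      x.2, by simpa [Polynomial.mem_support_iff] using hne.2,
      Finset.HasAntidiagonal.mem_antidiagonal.mp hx⟩
  · rintro ⟨a, ha, b, hb, rfl⟩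
    refine ⟨(a, b), Finset.HasAntidiagonal.mem_antidiagonal.mpr rfl, ?_⟩
    rw [Bmul]
    push_neg
    exact ⟨by simpa [Polynomial.mem_support_iff] using ha,
      by simpa [Polynomial.mem_support_iff] using hb⟩

/-- the congruence `E k` -/
def E (k : ℕ) : RingCon (Polynomial B) where
  r := fun f g => cl k ↑f.support = cl k ↑g.support
  iseqv := ⟨fun _ => rfl, Eq.symm, Eq.trans⟩
  mul' := fun {w x y z} h1 h2 => by
    show cl k ((w * y).support : Set ℕ) = cl k ((x * z).support : Set ℕ)
    rw [supp_mul, supp_mul, ← cl_addset, h1, h2, cl_addset]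
  add' := fun {w x y z} h1 h2 => by
    show cl k ((w + y).support : Set ℕ) = cl k ((x + z).support : Set ℕ)
    rw [supp_add, supp_add, ← cl_union, h1, h2, cl_union]

lemma E_rel (k : ℕ) (f g : Polynomial B) :
    E k f g ↔ cl k ↑f.support = cl k ↑g.support := Iff.rfl

/-- the union congruence -/
def U : RingCon (Polynomial B) where
  r := fun f g => ∃ k, cl k ↑f.support = cl k ↑g.support
  iseqv := ⟨fun _ => ⟨0, rfl⟩, fun ⟨k, h⟩ => ⟨k, h.symm⟩,
    fun ⟨k1, h1⟩ ⟨k2, h2⟩ => ⟨max k1 k2,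
      (cl_stab (le_max_left k1 k2) h1).trans (cl_stab (le_max_right k1 k2) h2)⟩⟩
  mul' := fun {w x y z} ⟨k1, h1⟩ ⟨k2, h2⟩ =>
    ⟨max k1 k2, (E (max k1 k2)).mul' (cl_stab (le_max_left k1 k2) h1)
      (cl_stab (le_max_right k1 k2) h2)⟩
  add' := fun {w x y z} ⟨k1, h1⟩ ⟨k2, h2⟩ =>
    ⟨max k1 k2, (E (max k1 k2)).add' (cl_stab (le_max_left k1 k2) h1)
      (cl_stab (le_max_right k1 k2) h2)⟩

def S2 (n : ℕ) : Set ℕ := {x | x = 0 ∨ x = n}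

lemma supp_Xn (n : ℕ) : (((X : Polynomial B) ^ n + 1).support : Set ℕ) = S2 n := by
  ext j
  simp only [Finset.mem_coe, Polynomial.mem_support_iff, Polynomial.coeff_add,
    Polynomial.coeff_X_pow, Polynomial.coeff_one, S2, Set.mem_setOf_eq]
  split_ifs with h1 h2 <;> simp_all <;> decide

lemma cl_full {k n : ℕ} (h1 : 1 ≤ n) (h2 : n ≤ k) : cl k (S2 n) = Set.univ := by
  apply Set.eq_univ_of_forall
  intro x
  exact Or.inr ⟨0, Or.inl rfl, n, Or.inr rfl, by omega, by omega, Nat.zero_le x⟩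

lemma one_notin_cl {K : ℕ} (hK : 1 ≤ K) : (1 : ℕ) ∉ cl K (S2 (K + 1)) := by
  rintro (h | ⟨a, ha, b, hb, h1, h2, h3⟩)
  · rcases h with h | h <;> omega
  · rcases ha with ha | ha <;> rcases hb with hb | hb <;> omega

end NFGaux

open Polynomial in
/-- In `B[X]` over the Boolean semifield, the congruence generated by the pairs
`(X^n + 1, X^m + 1)` for `n, m ≥ 1` is not finitely generated. -/
theorem stmt_9 :
    ¬ ∃ s : Finset (Polynomial BoolSemifield × Polynomial BoolSemifield),
      ringConGen (fun a b : Polynomial BoolSemifield =>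
          ∃ n m : ℕ, 1 ≤ n ∧ 1 ≤ m ∧ a = X ^ n + 1 ∧ b = X ^ m + 1) =
        ringConGen (fun a b => (a, b) ∈ s) := by
  classical
  rintro ⟨s, hs⟩
  set gen : Polynomial NFGaux.B → Polynomial NFGaux.B → Prop := fun a b =>
    ∃ n m : ℕ, 1 ≤ n ∧ 1 ≤ m ∧ a = X ^ n + 1 ∧ b = X ^ m + 1 with hgen_def
  -- every generator pair is in U
  have hU : ringConGen gen ≤ NFGaux.U := by
    apply RingCon.ringConGen_le.mpr
    rintro a b ⟨n, m, hn, hm, rfl, rfl⟩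
    refine ⟨max n m, ?_⟩
    show NFGaux.cl _ _ = NFGaux.cl _ _
    rw [NFGaux.supp_Xn, NFGaux.supp_Xn,
      NFGaux.cl_full hn (le_max_left n m), NFGaux.cl_full hm (le_max_right n m)]
  -- each pair of s is in some E k
  have hsU : ∀ p : Polynomial NFGaux.B × Polynomial NFGaux.B, p ∈ s →
      ∃ k, NFGaux.cl k ↑p.1.support = NFGaux.cl k ↑p.2.support := by
    intro p hp
    have h1 : ringConGen (fun a b => (a, b) ∈ s) p.1 p.2 :=
      RingConGen.Rel.of _ _ hp
    rw [← hs] at h1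
    exact hU h1
  choose F hF using hsU
  set K : ℕ := 1 + s.sup (fun p => if h : p ∈ s then F p h else 0) with hK
  have hK1 : 1 ≤ K := Nat.le_add_right 1 _
  -- the congruence generated by s is contained in E K
  have hE : ringConGen (fun a b => (a, b) ∈ s) ≤ NFGaux.E K := by
    apply RingCon.ringConGen_le.mpr
    intro a b hab
    have hle : F (a, b) hab ≤ K := by
      have h2 := Finset.le_sup (f := fun p => if h : p ∈ s then F p h else 0) hab
      simp only [dif_pos hab] at h2
      omega
    exact NFGaux.cl_stab hle (hF (a, b) hab)
  rw [← hs] at hE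
  -- the generator pair (X + 1, X ^ (K + 1) + 1)
  have hg : ringConGen gen (X + 1) (X ^ (K + 1) + 1) := by
    refine RingConGen.Rel.of _ _ ⟨1, K + 1, le_refl 1, by omega, ?_, rfl⟩
    rw [pow_one]
  have h3 : NFGaux.E K (X + 1) (X ^ (K + 1) + 1) := hE hg
  have h4 : NFGaux.cl K ↑((X : Polynomial NFGaux.B) + 1).support =
      NFGaux.cl K ↑((X : Polynomial NFGaux.B) ^ (K + 1) + 1).support := h3
  rw [show ((X : Polynomial NFGaux.B) + 1) = X ^ 1 + 1 by rw [pow_one],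
    NFGaux.supp_Xn, NFGaux.supp_Xn, NFGaux.cl_full (le_refl 1) hK1] at h4
  have h5 : (1 : ℕ) ∈ NFGaux.cl K (NFGaux.S2 (K + 1)) := by
    rw [← h4]; trivial
  exact NFGaux.one_notin_cl hK1 h5
end

section
/- The ideal of B[X] generated by {X^n + 1 : n ≥ 1} is not finitely generated; hence B[X] is not a Noetherian semiring. -/
namespace StmtAux

open Polynomial

abbrev B := BoolSemifield

lemma b_add_eq_zero : ∀ a b : B, a + b = 0 ↔ a = 0 ∧ b = 0 := by decide

lemma b_mul_ne_zero : ∀ a b : B, a ≠ 0 → b ≠ 0 → a * b ≠ 0 := by decide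

lemma b_one_ne_zero : (1 : B) ≠ 0 := by decide

lemma b_sum_eq_zero_iff {ι : Type*} (s : Finset ι) (f : ι → B) :
    ∑ i ∈ s, f i = 0 ↔ ∀ i ∈ s, f i = 0 := by
  classical
  induction s using Finset.induction_on with
  | empty => simp
  | insert _ _ hne ih =>
    rw [Finset.sum_insert hne, b_add_eq_zero, ih]
    simp_all

lemma mem_support_mul {p q : B[X]} {a b : ℕ}
    (ha : a ∈ p.support) (hb : b ∈ q.support) : a + b ∈ (p * q).support := by
  rw [Polynomial.mem_support_iff] at ha hb ⊢
  rw [Polynomial.coeff_mul]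
  intro h
  rw [b_sum_eq_zero_iff] at h
  exact b_mul_ne_zero _ _ ha hb
    (h (a, b) (by simp [Finset.mem_antidiagonal]))

lemma mem_support_add_left {p q : B[X]} {a : ℕ} (ha : a ∈ p.support) :
    a ∈ (p + q).support := by
  rw [Polynomial.mem_support_iff] at ha ⊢
  rw [Polynomial.coeff_add]
  intro h
  exact ha ((b_add_eq_zero _ _).1 h).1

lemma mem_support_add_right {p q : B[X]} {a : ℕ} (ha : a ∈ q.support) :
    a ∈ (p + q).support := by
  rw [add_comm]; exact mem_support_add_left ha

lemma add_eq_zero_poly {p q : B[X]} (h : p + q = 0) : p = 0 ∧ q = 0 := by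
  constructor <;> (ext n; have := congrArg (fun r => Polynomial.coeff r n) h
                   simp only [Polynomial.coeff_add, Polynomial.coeff_zero] at this)
  · exact ((b_add_eq_zero _ _).1 this).1
  · exact ((b_add_eq_zero _ _).1 this).2

/-- Every nonzero element of the span has two distinct exponents in its support. -/
lemma two_points {g : B[X]}
    (hg : g ∈ Ideal.span {p : B[X] | ∃ n : ℕ, 1 ≤ n ∧ p = X ^ n + 1}) (hg0 : g ≠ 0) :
    ∃ a b : ℕ, a ∈ g.support ∧ b ∈ g.support ∧ a < b := by
  induction hg using Submodule.span_induction with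
  | mem x hx =>
    obtain ⟨n, hn, rfl⟩ := hx
    refine ⟨0, n, ?_, ?_, hn⟩
    · apply mem_support_add_right
      simp [Polynomial.mem_support_iff, b_one_ne_zero]
    · apply mem_support_add_left
      simp [Polynomial.mem_support_iff, b_one_ne_zero]
  | zero => exact absurd rfl hg0
  | add x y hx hy ihx ihy =>
    by_cases hx0 : x = 0
    · have hy0 : y ≠ 0 := by rintro rfl; simp_all
      obtain ⟨a, b, ha, hb, hab⟩ := ihy hy0
      exact ⟨a, b, mem_support_add_right ha, mem_support_add_right hb, hab⟩
    · obtain ⟨a, b, ha, hb, hab⟩ := ihx hx0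
      exact ⟨a, b, mem_support_add_left ha, mem_support_add_left hb, hab⟩
  | smul c x hmemx =>
    rename_i ih
    rw [smul_eq_mul] at hg0 ⊢
    have hc : c ≠ 0 := by rintro rfl; simp at hg0
    have hx0 : x ≠ 0 := by rintro rfl; simp at hg0
    obtain ⟨a, b, ha, hb, hab⟩ := ih hx0
    obtain ⟨e, he⟩ := Polynomial.support_nonempty.2 hc
    exact ⟨e + a, e + b, mem_support_mul he ha, mem_support_mul he hb, by omega⟩

end StmtAux

open Polynomial in
/-- The ideal of `B[X]` generated by `{X^n + 1 : n ≥ 1}` is not finitely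
generated; hence `B[X]` is not a Noetherian semiring. -/
theorem stmt_10 :
    ¬ (Ideal.span {p : Polynomial BoolSemifield | ∃ n : ℕ, 1 ≤ n ∧ p = X ^ n + 1}).FG ∧
    ¬ ∀ I : Ideal (Polynomial BoolSemifield), I.FG := by
  open StmtAux in
  have main : ¬ (Ideal.span {p : Polynomial BoolSemifield | ∃ n : ℕ, 1 ≤ n ∧ p = X ^ n + 1}).FG := by
    rintro ⟨G, hG⟩
    set S : Set (B[X]) := {p : B[X] | ∃ n : ℕ, 1 ≤ n ∧ p = X ^ n + 1} with hS
    set m : ℕ := 1 + G.sup Polynomial.natDegree with hm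
    have hm1 : 1 ≤ m := by omega
    -- X^m + 1 is in the span
    have hmem : (X ^ m + 1 : B[X]) ∈ Ideal.span S := Ideal.subset_span ⟨m, hm1, rfl⟩
    rw [← hG] at hmem
    obtain ⟨f, -, hf⟩ := Submodule.mem_span_finset.mp hmem
    -- coefficient of X^m+1 at 0 is 1, hence nonzero
    have hc0 : (X ^ m + 1 : B[X]).coeff 0 ≠ 0 := by
      rw [Polynomial.coeff_add, Polynomial.coeff_X_pow, Polynomial.coeff_one,
        if_neg (by omega : ¬ (0 : ℕ) = m), if_pos rfl, zero_add]
      exact b_one_ne_zero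
    -- find a g ∈ G whose term contributes at 0
    have : ∃ g ∈ G, ((f g • g : B[X])).coeff 0 ≠ 0 := by
      by_contra h
      push_neg at h
      apply hc0
      rw [← hf, Polynomial.finset_sum_coeff, b_sum_eq_zero_iff]
      exact h
    obtain ⟨g, hgG, hg0⟩ := this
    rw [smul_eq_mul] at hg0
    have hfg : f g ≠ 0 := by rintro h; rw [h] at hg0; simp at hg0
    have hgne : g ≠ 0 := by rintro rfl; simp at hg0
    have hgspan : g ∈ Ideal.span S := by
      rw [← hG]; exact Ideal.subset_span hgG
    obtain ⟨a, b, ha, hb, hab⟩ := two_points hgspan hgne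
    obtain ⟨e, he⟩ := Polynomial.support_nonempty.2 hfg
    -- e+a and e+b are in the support of f g • g, hence of X^m+1
    have hsub : (f g • g : B[X]).support ⊆ (X ^ m + 1 : B[X]).support := by
      intro k hk
      rw [Polynomial.mem_support_iff] at hk ⊢
      rw [← hf, Polynomial.finset_sum_coeff]
      intro hz
      rw [b_sum_eq_zero_iff] at hz
      exact hk (hz g hgG)
    have hea : e + a ∈ (X ^ m + 1 : B[X]).support := by
      apply hsub
      rw [smul_eq_mul]
      exact mem_support_mul he ha
    have heb : e + b ∈ (X ^ m + 1 : B[X]).support := by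
      apply hsub
      rw [smul_eq_mul]
      exact mem_support_mul he hb
    -- support of X^m+1 is {0, m}
    have hsupp : ∀ k ∈ (X ^ m + 1 : B[X]).support, k = 0 ∨ k = m := by
      intro k hk
      rw [Polynomial.mem_support_iff, Polynomial.coeff_add, Polynomial.coeff_X_pow,
        Polynomial.coeff_one] at hk
      by_contra h
      push_neg at h
      apply hk
      rw [if_neg h.2, if_neg h.1, add_zero]
    -- b ≤ natDegree g < m
    have hbd : b ≤ g.natDegree := Polynomial.le_natDegree_of_mem_supp b hb
    have hgd : g.natDegree ≤ G.sup Polynomial.natDegree := Finset.le_sup hgG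
    rcases hsupp _ hea with h1 | h1 <;> rcases hsupp _ heb with h2 | h2 <;> omega
  exact ⟨main, fun h => main (h _)⟩
end

section
/- Let R be a commutative semiring such that the polynomial semiring R[X] is c-Noetherian (every congruence on R[X] is finitely generated). Then R is a ring, and moreover a Noetherian ring. -/
open Polynomial Pointwise

namespace Stmt12

lemma bool_add_eq_zero : ∀ a b : BoolSemifield, a + b = 0 ↔ a = 0 ∧ b = 0 := by decide

lemma bool_mul_ne_zero : ∀ a b : BoolSemifield, a * b ≠ 0 ↔ a ≠ 0 ∧ b ≠ 0 := by decide

lemma bool_cases : ∀ a : BoolSemifield, a = 0 ∨ a = 1 := by decide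

lemma bool_one_ne_zero : (1 : BoolSemifield) ≠ 0 := by decide

/-! ### The "dyadic fill" closure on subsets of ℕ -/

inductive Cl (N : ℕ) (A : Set ℕ) : ℕ → Prop
  | base {m : ℕ} : m ∈ A → Cl N A m
  | fill {j m : ℕ} : 1 ≤ j → j ≤ N → Cl N A m → Cl N A (m + 2 ^ j) → Cl N A (m + 2 ^ (j - 1))

def clS (N : ℕ) (A : Set ℕ) : Set ℕ := {m | Cl N A m}

lemma subset_clS {N : ℕ} {A : Set ℕ} : A ⊆ clS N A := fun _ h => Cl.base h

lemma clS_minimal {N : ℕ} {A B : Set ℕ} (hAB : A ⊆ clS N B) : clS N A ⊆ clS N B := by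
  intro m hm
  induction hm with
  | base h => exact hAB h
  | fill h1 h2 _ _ ih1 ih2 => exact Cl.fill h1 h2 ih1 ih2

lemma clS_mono {N : ℕ} {A B : Set ℕ} (h : A ⊆ B) : clS N A ⊆ clS N B :=
  clS_minimal (fun x hx => subset_clS (h hx))

lemma clS_union (N : ℕ) (A B : Set ℕ) : clS N (clS N A ∪ clS N B) = clS N (A ∪ B) :=
  Set.Subset.antisymm
    (clS_minimal (Set.union_subset (clS_mono Set.subset_union_left)
      (clS_mono Set.subset_union_right)))
    (clS_mono (Set.union_subset_union subset_clS subset_clS))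

lemma clS_add_mem {N : ℕ} {A B : Set ℕ} :
    ∀ {x : ℕ}, Cl N A x → ∀ {y : ℕ}, Cl N B y → (x + y) ∈ clS N (A + B) := by
  intro x hx
  induction hx with
  | @base m hm =>
    intro y hy
    induction hy with
    | base hn => exact subset_clS (Set.add_mem_add hm hn)
    | @fill j n h1 h2 _ _ ih1 ih2 =>
      have e1 : m + (n + 2 ^ j) = (m + n) + 2 ^ j := by ring
      rw [e1] at ih2
      have := Cl.fill h1 h2 ih1 ih2
      have e2 : (m + n) + 2 ^ (j - 1) = m + (n + 2 ^ (j - 1)) := by ring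
      rwa [e2] at this
  | @fill j m h1 h2 _ _ ih1 ih2 =>
    intro y hy
    have h1' := ih1 hy
    have h2' := ih2 hy
    have e1 : (m + 2 ^ j) + y = (m + y) + 2 ^ j := by ring
    rw [e1] at h2'
    have := Cl.fill h1 h2 h1' h2'
    have e2 : (m + y) + 2 ^ (j - 1) = (m + 2 ^ (j - 1)) + y := by ring
    rwa [e2] at this

lemma clS_addset (N : ℕ) (A B : Set ℕ) : clS N (clS N A + clS N B) = clS N (A + B) := by
  apply Set.Subset.antisymm
  · apply clS_minimal
    rintro x ⟨a, ha, b, hb, rfl⟩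
    exact clS_add_mem ha hb
  · exact clS_mono (Set.add_subset_add subset_clS subset_clS)

lemma clS_monoN {M N : ℕ} (h : M ≤ N) {A : Set ℕ} : clS M A ⊆ clS N A := by
  intro m hm
  induction hm with
  | base h' => exact Cl.base h'
  | fill h1 h2 _ _ ih1 ih2 => exact Cl.fill h1 (le_trans h2 h) ih1 ih2

lemma clS_absorbN {M N : ℕ} (h : M ≤ N) (A : Set ℕ) : clS N (clS M A) = clS N A :=
  Set.Subset.antisymm (clS_minimal (fun x hx => clS_monoN h hx)) (clS_mono subset_clS)

lemma clS_sep (N : ℕ) : clS N {0, 2 ^ (N + 1)} = {0, 2 ^ (N + 1)} := by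
  apply Set.Subset.antisymm _ subset_clS
  intro m hm
  induction hm with
  | base h => exact h
  | @fill j m h1 h2 _ _ ih1 ih2 =>
    exfalso
    have hp : 0 < 2 ^ j := pow_pos (by norm_num) j
    simp only [Set.mem_insert_iff, Set.mem_singleton_iff] at ih1 ih2
    rcases ih1 with h0 | hA
    · rcases ih2 with h0' | hA'
      · omega
      · subst h0
        rw [zero_add] at hA'
        have : j = N + 1 := Nat.pow_right_injective (by norm_num) hA'
        omega
    · rcases ih2 with h0' | hA' <;> omega

/-! ### Supports of Boolean polynomials -/

def suppS (f : Polynomial BoolSemifield) : Set ℕ := {n | f.coeff n ≠ 0}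

lemma suppS_add (f g : Polynomial BoolSemifield) : suppS (f + g) = suppS f ∪ suppS g := by
  ext n
  simp only [suppS, Set.mem_setOf_eq, Set.mem_union, coeff_add]
  rw [Ne, bool_add_eq_zero]
  tauto

lemma bool_sum_eq_zero {ι : Type*} (s : Finset ι) (F : ι → BoolSemifield) :
    (∑ i ∈ s, F i) = 0 ↔ ∀ i ∈ s, F i = 0 := by
  classical
  induction s using Finset.induction_on with
  | empty => simp
  | @insert a t ha ih =>
    rw [Finset.sum_insert ha, bool_add_eq_zero, ih]
    simp [Finset.forall_mem_insert]

lemma suppS_mul (f g : Polynomial BoolSemifield) : suppS (f * g) = suppS f + suppS g := by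
  ext n
  simp only [suppS, Set.mem_setOf_eq, Set.mem_add, coeff_mul]
  rw [Ne, bool_sum_eq_zero]
  push_neg
  constructor
  · rintro ⟨p, hp, hne⟩
    rw [Finset.HasAntidiagonal.mem_antidiagonal] at hp
    rcases (bool_mul_ne_zero _ _).1 hne with ⟨h1, h2⟩
    exact ⟨p.1, h1, p.2, h2, hp⟩
  · rintro ⟨a, ha, b, hb, rfl⟩
    exact ⟨(a, b), Finset.HasAntidiagonal.mem_antidiagonal.2 rfl, (bool_mul_ne_zero _ _).2 ⟨ha, hb⟩⟩

lemma suppS_one : suppS (1 : Polynomial BoolSemifield) = {0} := by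
  ext n
  by_cases h : n = 0 <;> simp [suppS, coeff_one, h, bool_one_ne_zero]

lemma suppS_Xpow (m : ℕ) : suppS ((X : Polynomial BoolSemifield) ^ m) = {m} := by
  ext n
  by_cases h : n = m <;> simp [suppS, coeff_X_pow, h, bool_one_ne_zero]

/-! ### The congruences Θ_N -/

def theta (N : ℕ) : RingCon (Polynomial BoolSemifield) where
  r f g := clS N (suppS f) = clS N (suppS g)
  iseqv := ⟨fun _ => rfl, Eq.symm, Eq.trans⟩
  add' := by
    intro a b c d h1 h2
    show clS N (suppS (a + c)) = clS N (suppS (b + d))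
    rw [suppS_add, suppS_add, ← clS_union, h1, h2, clS_union]
  mul' := by
    intro a b c d h1 h2
    show clS N (suppS (a * c)) = clS N (suppS (b * d))
    rw [suppS_mul, suppS_mul, ← clS_addset, h1, h2, clS_addset]

lemma theta_mono {M N : ℕ} (h : M ≤ N) {f g : Polynomial BoolSemifield}
    (ht : theta M f g) : theta N f g := by
  have ht' : clS M (suppS f) = clS M (suppS g) := ht
  show clS N (suppS f) = clS N (suppS g)
  rw [← clS_absorbN h (suppS f), ← clS_absorbN h (suppS g), ht']

noncomputable def gL (k : ℕ) : Polynomial BoolSemifield := 1 + X ^ 2 ^ (k + 1)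
noncomputable def gR (k : ℕ) : Polynomial BoolSemifield := 1 + X ^ 2 ^ k + X ^ 2 ^ (k + 1)

lemma suppS_gL (k : ℕ) : suppS (gL k) = {0, 2 ^ (k + 1)} := by
  rw [gL, suppS_add, suppS_one, suppS_Xpow, Set.singleton_union]

lemma suppS_gR (k : ℕ) : suppS (gR k) = {0, 2 ^ k, 2 ^ (k + 1)} := by
  rw [gR, suppS_add, suppS_add, suppS_one, suppS_Xpow, suppS_Xpow]
  ext n
  simp [Set.mem_insert_iff]
  tauto

lemma theta_g {N k : ℕ} (hk : k < N) : theta N (gL k) (gR k) := by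
  show clS N (suppS (gL k)) = clS N (suppS (gR k))
  rw [suppS_gL, suppS_gR]
  apply Set.Subset.antisymm
  · apply clS_mono
    intro x hx
    simp only [Set.mem_insert_iff, Set.mem_singleton_iff] at hx ⊢
    tauto
  · apply clS_minimal
    intro x hx
    simp only [Set.mem_insert_iff, Set.mem_singleton_iff] at hx
    rcases hx with rfl | rfl | rfl
    · exact Cl.base (by simp)
    · have hb0 : Cl N ({0, 2 ^ (k + 1)} : Set ℕ) 0 := Cl.base (by simp)
      have hb1 : Cl N ({0, 2 ^ (k + 1)} : Set ℕ) (0 + 2 ^ (k + 1)) := by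
        rw [zero_add]; exact Cl.base (by simp)
      have := Cl.fill (Nat.succ_le_succ (Nat.zero_le k)) hk hb0 hb1
      exact (by simpa using this : Cl N ({0, 2 ^ (k + 1)} : Set ℕ) (2 ^ k))
    · exact Cl.base (by simp)

/-! ### B[X] is not congruence-Noetherian -/

def bigU : RingCon (Polynomial BoolSemifield) where
  r f g := ∃ N, theta N f g
  iseqv := by
    refine ⟨fun f => ⟨0, (theta 0).refl f⟩, ?_, ?_⟩
    · rintro x y ⟨N, hN⟩; exact ⟨N, (theta N).symm hN⟩
    · rintro x y z ⟨M, hM⟩ ⟨N, hN⟩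
      exact ⟨max M N, (theta _).trans (theta_mono (le_max_left M N) hM)
        (theta_mono (le_max_right M N) hN)⟩
  add' := by
    rintro a b c d ⟨M, hM⟩ ⟨N, hN⟩
    exact ⟨max M N, (theta _).add (theta_mono (le_max_left M N) hM)
      (theta_mono (le_max_right M N) hN)⟩
  mul' := by
    rintro a b c d ⟨M, hM⟩ ⟨N, hN⟩
    exact ⟨max M N, (theta _).mul (theta_mono (le_max_left M N) hM)
      (theta_mono (le_max_right M N) hN)⟩

theorem bool_not_fg :
    ¬ (∀ c : RingCon (Polynomial BoolSemifield),
        ∃ s : Finset (Polynomial BoolSemifield × Polynomial BoolSemifield),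
          c = ringConGen (fun a b => (a, b) ∈ s)) := by
  classical
  intro h
  set γ : Polynomial BoolSemifield → Polynomial BoolSemifield → Prop :=
    fun p q => ∃ k, p = gL k ∧ q = gR k with hγ
  obtain ⟨s, hs⟩ := h (ringConGen γ)
  have hle : ringConGen γ ≤ bigU := by
    apply RingCon.ringConGen_le.mpr
    rintro p q ⟨k, rfl, rfl⟩
    exact ⟨k + 1, theta_g (Nat.lt_succ_self k)⟩
  have hsθ : ∀ p ∈ s, ∃ N, theta N p.1 p.2 := by
    intro p hp
    have hp' : (ringConGen γ) p.1 p.2 := by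
      rw [hs]; exact RingConGen.Rel.of _ _ hp
    exact hle hp'
  choose F hF using hsθ
  set N₀ : ℕ := s.attach.sup (fun p => F p.1 p.2) with hN₀
  have hθ : ∀ p ∈ s, theta N₀ p.1 p.2 := by
    intro p hp
    exact theta_mono (Finset.le_sup (s.mem_attach ⟨p, hp⟩)) (hF p hp)
  have hc : ringConGen γ ≤ theta N₀ := by
    rw [hs]
    apply RingCon.ringConGen_le.mpr
    intro x y hxy
    exact hθ (x, y) hxy
  have hrel : theta N₀ (gL N₀) (gR N₀) := hc (RingConGen.Rel.of _ _ ⟨N₀, rfl, rfl⟩)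
  have he : clS N₀ ({0, 2 ^ (N₀ + 1)} : Set ℕ) = clS N₀ ({0, 2 ^ N₀, 2 ^ (N₀ + 1)} : Set ℕ) := by
    have := hrel
    rwa [show (theta N₀ (gL N₀) (gR N₀)) = (clS N₀ (suppS (gL N₀)) = clS N₀ (suppS (gR N₀))) from rfl,
      suppS_gL, suppS_gR] at this
  have hmem : (2 ^ N₀ : ℕ) ∈ clS N₀ ({0, 2 ^ (N₀ + 1)} : Set ℕ) := by
    rw [he]; exact Cl.base (by simp)
  rw [clS_sep] at hmem
  simp only [Set.mem_insert_iff, Set.mem_singleton_iff] at hmem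
  have h1 : 0 < 2 ^ N₀ := pow_pos (by norm_num) N₀
  have h2 : 2 ^ (N₀ + 1) = 2 * 2 ^ N₀ := by rw [pow_succ]; ring
  omega

/-! ### A semiring that is not a ring surjects onto the Boolean semifield -/

lemma exists_boolHom {R : Type*} [CommSemiring R] (h1 : ¬ ∃ u : R, 1 + u = 0) :
    ∃ φ : R →+* BoolSemifield, Function.Surjective φ := by
  classical
  set S : Set (Set R) :=
    {P | 0 ∈ P ∧ (∀ a b : R, a ∈ P → b ∈ P → a + b ∈ P) ∧ (∀ a b : R, a ∈ P → a * b ∈ P) ∧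
      (∀ a b : R, a + b ∈ P → a ∈ P) ∧ (1 : R) ∉ P} with hS
  have hz : ({a : R | ∃ b, a + b = 0}) ∈ S := by
    refine ⟨⟨0, by rw [add_zero]⟩, ?_, ?_, ?_, ?_⟩
    · rintro a b ⟨a', ha⟩ ⟨b', hb⟩
      exact ⟨a' + b', by rw [show a + b + (a' + b') = (a + a') + (b + b') by ring, ha, hb, add_zero]⟩
    · rintro a b ⟨a', ha⟩
      exact ⟨a' * b, by rw [← add_mul, ha, zero_mul]⟩
    · rintro a b ⟨c, hc⟩
      exact ⟨b + c, by rw [← add_assoc, hc]⟩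
    · rintro ⟨u, hu⟩
      exact h1 ⟨u, hu⟩
  have hchaincond : ∀ c ⊆ S, IsChain (· ⊆ ·) c → c.Nonempty →
      ∃ ub ∈ S, ∀ s ∈ c, s ⊆ ub := by
    intro c hcS hchain hcne
    refine ⟨⋃₀ c, ?_, fun t ht => Set.subset_sUnion_of_mem ht⟩
    obtain ⟨t0, ht0⟩ := hcne
    refine ⟨⟨t0, ht0, (hcS ht0).1⟩, ?_, ?_, ?_, ?_⟩
    · rintro a b ⟨t1, ht1, ha⟩ ⟨t2, ht2, hb⟩
      rcases hchain.total ht1 ht2 with hsub | hsub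
      · exact ⟨t2, ht2, (hcS ht2).2.1 a b (hsub ha) hb⟩
      · exact ⟨t1, ht1, (hcS ht1).2.1 a b ha (hsub hb)⟩
    · rintro a b ⟨t1, ht1, ha⟩
      exact ⟨t1, ht1, (hcS ht1).2.2.1 a b ha⟩
    · rintro a b ⟨t1, ht1, hab⟩
      exact ⟨t1, ht1, (hcS ht1).2.2.2.1 a b hab⟩
    · rintro ⟨t1, ht1, h1'⟩
      exact (hcS ht1).2.2.2.2 h1'
  obtain ⟨P, -, hPmem, hPmax⟩ := zorn_subset_nonempty S hchaincond _ hz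
  obtain ⟨hP0, hPadd, hPmul, hPstrong, hP1⟩ := hPmem
  -- key saturation step
  have hkey : ∀ a : R, a ∉ P → ∃ y p r : R, p ∈ P ∧ 1 + y = p + r * a := by
    intro a ha
    set Pa : Set R := {x | ∃ y p r : R, p ∈ P ∧ x + y = p + r * a} with hPa
    have hPsub : P ⊆ Pa := by
      intro x hx
      exact ⟨0, x, 0, hx, by rw [add_zero, zero_mul, add_zero]⟩
    have haPa : a ∈ Pa := ⟨0, 0, 1, hP0, by rw [add_zero, zero_add, one_mul]⟩
    by_contra hno
    push_neg at hno
    have hPaS : Pa ∈ S := by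
      refine ⟨hPsub hP0, ?_, ?_, ?_, ?_⟩
      · rintro x x' ⟨y, p, r, hp, he⟩ ⟨y', p', r', hp', he'⟩
        refine ⟨y + y', p + p', r + r', hPadd _ _ hp hp', ?_⟩
        rw [show x + x' + (y + y') = (x + y) + (x' + y') by ring, he, he']
        ring
      · rintro x c ⟨y, p, r, hp, he⟩
        refine ⟨y * c, p * c, r * c, hPmul _ _ hp, ?_⟩
        rw [← add_mul, he]
        ring
      · rintro x x' ⟨y, p, r, hp, he⟩
        exact ⟨x' + y, p, r, hp, by rw [← add_assoc, he]⟩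
      · rintro ⟨y, p, r, hp, he⟩
        exact hno y p r hp he
    have : Pa ⊆ P := hPmax hPaS hPsub
    exact ha (this haPa)
  have hprime : ∀ a b : R, a * b ∈ P → a ∈ P ∨ b ∈ P := by
    intro a b hab
    by_contra hcon
    push_neg at hcon
    obtain ⟨y, p, r, hp, h1'⟩ := hkey a hcon.1
    obtain ⟨y', q, t, hq, h2'⟩ := hkey b hcon.2
    have hP1' : (1 + y) * (1 + y') ∈ P := by
      rw [h1', h2']
      rw [show (p + r * a) * (q + t * b) = p * (q + t * b) + q * (r * a) + (a * b) * (r * t) by ring]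
      exact hPadd _ _ (hPadd _ _ (hPmul _ _ hp) (hPmul _ _ hq)) (hPmul _ _ hab)
    rw [show (1 + y) * (1 + y') = 1 + (y + y' + y * y') by ring] at hP1'
    exact hP1 (hPstrong _ _ hP1')
  refine ⟨{ toFun := fun a => if a ∈ P then (0 : BoolSemifield) else 1,
            map_one' := if_neg hP1, map_zero' := if_pos hP0,
            map_mul' := ?_, map_add' := ?_ }, ?_⟩
  · intro x y
    show (if x * y ∈ P then (0 : BoolSemifield) else 1) =
      (if x ∈ P then (0 : BoolSemifield) else 1) * (if y ∈ P then (0 : BoolSemifield) else 1)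
    by_cases hx : x ∈ P
    · rw [if_pos hx, if_pos (hPmul x y hx), zero_mul]
    · by_cases hy : y ∈ P
      · rw [if_pos (by rw [mul_comm]; exact hPmul y x hy), if_neg hx, if_pos hy, mul_zero]
      · have : x * y ∉ P := fun hc => by rcases hprime x y hc with h | h <;> [exact hx h; exact hy h]
        rw [if_neg this, if_neg hx, if_neg hy]
        decide
  · intro x y
    show (if x + y ∈ P then (0 : BoolSemifield) else 1) =
      (if x ∈ P then (0 : BoolSemifield) else 1) + (if y ∈ P then (0 : BoolSemifield) else 1)
    by_cases hx : x ∈ P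
    · by_cases hy : y ∈ P
      · rw [if_pos (hPadd x y hx hy), if_pos hx, if_pos hy]
        decide
      · have : x + y ∉ P := fun hc => hy (hPstrong y x (by rwa [add_comm] at hc))
        rw [if_neg this, if_pos hx, if_neg hy]
        decide
    · have : x + y ∉ P := fun hc => hx (hPstrong x y hc)
      rw [if_neg this, if_neg hx]
      by_cases hy : y ∈ P
      · rw [if_pos hy]; decide
      · rw [if_neg hy]; decide
  · intro b
    rcases bool_cases b with rfl | rfl
    · exact ⟨0, if_pos hP0⟩
    · exact ⟨1, if_neg hP1⟩

/-! ### Transport of the fg property along surjective ring homs -/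

def comapRC {A B : Type*} [NonAssocSemiring A] [NonAssocSemiring B] (f : A →+* B)
    (c : RingCon B) : RingCon A where
  r x y := c (f x) (f y)
  iseqv := ⟨fun x => c.refl _, c.symm, c.trans⟩
  add' := by
    intro w x y z h1 h2
    have := c.add h1 h2
    rwa [← map_add, ← map_add] at this
  mul' := by
    intro w x y z h1 h2
    have := c.mul h1 h2
    rwa [← map_mul, ← map_mul] at this

lemma fg_transport {A B : Type*} [CommSemiring A] [CommSemiring B] (f : A →+* B)
    (hf : Function.Surjective f)
    (h : ∀ c : RingCon A, ∃ s : Finset (A × A), c = ringConGen (fun a b => (a, b) ∈ s)) :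
    ∀ c : RingCon B, ∃ s : Finset (B × B), c = ringConGen (fun a b => (a, b) ∈ s) := by
  classical
  intro c
  obtain ⟨s, hs⟩ := h (comapRC f c)
  refine ⟨s.image (fun p => (f p.1, f p.2)), le_antisymm ?_ ?_⟩
  · intro x y hxy
    obtain ⟨u, rfl⟩ := hf x
    obtain ⟨v, rfl⟩ := hf y
    have hc' : (comapRC f c) u v := hxy
    rw [hs] at hc'
    have hle : ringConGen (fun a b => (a, b) ∈ s) ≤
        comapRC f (ringConGen (fun a b => (a, b) ∈ s.image (fun p => (f p.1, f p.2)))) := by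
      apply RingCon.ringConGen_le.mpr
      intro a b hab
      exact RingConGen.Rel.of _ _ (Finset.mem_image.2 ⟨(a, b), hab, rfl⟩)
    exact hle hc'
  · apply RingCon.ringConGen_le.mpr
    intro x y hxy
    obtain ⟨p, hp, heq⟩ := Finset.mem_image.1 hxy
    have hrel : (comapRC f c) p.1 p.2 := by
      rw [hs]; exact RingConGen.Rel.of _ _ hp
    have hcc : c (f p.1) (f p.2) := hrel
    have e1 : f p.1 = x := congrArg Prod.fst heq
    have e2 : f p.2 = y := congrArg Prod.snd heq
    rwa [e1, e2] at hcc

/-! ### Ideals from congruences -/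

lemma coeff_mul_mem {R : Type*} [CommSemiring R] (I : Ideal R) (f u : Polynomial R)
    (hu : ∀ n, u.coeff n ∈ I) (n : ℕ) : (f * u).coeff n ∈ I := by
  rw [Polynomial.coeff_mul]
  exact Submodule.sum_mem _ (fun p _ => I.mul_mem_left _ (hu p.2))

def idealCon {R : Type*} [CommSemiring R] (I : Ideal R) : RingCon (Polynomial R) where
  r f g := ∃ u v : Polynomial R, (∀ n, u.coeff n ∈ I) ∧ (∀ n, v.coeff n ∈ I) ∧ f + u = g + v
  iseqv := by
    refine ⟨fun f => ⟨0, 0, ?_, ?_, rfl⟩, ?_, ?_⟩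
    · intro n; simp [I.zero_mem]
    · intro n; simp [I.zero_mem]
    · rintro f g ⟨u, v, hu, hv, he⟩
      exact ⟨v, u, hv, hu, he.symm⟩
    · rintro f g k ⟨u, v, hu, hv, he⟩ ⟨u', v', hu', hv', he'⟩
      refine ⟨u + u', v' + v, ?_, ?_, ?_⟩
      · intro n; rw [Polynomial.coeff_add]; exact I.add_mem (hu n) (hu' n)
      · intro n; rw [Polynomial.coeff_add]; exact I.add_mem (hv' n) (hv n)
      · calc f + (u + u') = (f + u) + u' := by ring
          _ = (g + u') + v := by rw [he]; ring
          _ = (k + v') + v := by rw [he']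
          _ = k + (v' + v) := by ring
  add' := by
    rintro f g f' g' ⟨u, v, hu, hv, he⟩ ⟨u', v', hu', hv', he'⟩
    refine ⟨u + u', v + v', ?_, ?_, ?_⟩
    · intro n; rw [Polynomial.coeff_add]; exact I.add_mem (hu n) (hu' n)
    · intro n; rw [Polynomial.coeff_add]; exact I.add_mem (hv n) (hv' n)
    · calc f + f' + (u + u') = (f + u) + (f' + u') := by ring
        _ = (g + v) + (g' + v') := by rw [he, he']
        _ = g + g' + (v + v') := by ring
  mul' := by
    rintro f g f' g' ⟨u, v, hu, hv, he⟩ ⟨u', v', hu', hv', he'⟩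
    refine ⟨f * u' + u * f' + u * u', g * v' + v * g' + v * v', ?_, ?_, ?_⟩
    · intro n
      rw [Polynomial.coeff_add, Polynomial.coeff_add]
      refine I.add_mem (I.add_mem ?_ ?_) ?_
      · exact coeff_mul_mem I f u' hu' n
      · rw [mul_comm]; exact coeff_mul_mem I f' u hu n
      · exact coeff_mul_mem I u u' hu' n
    · intro n
      rw [Polynomial.coeff_add, Polynomial.coeff_add]
      refine I.add_mem (I.add_mem ?_ ?_) ?_
      · exact coeff_mul_mem I g v' hv' n
      · rw [mul_comm]; exact coeff_mul_mem I g' v hv n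
      · exact coeff_mul_mem I v v' hv' n
    · calc f * f' + (f * u' + u * f' + u * u') = (f + u) * (f' + u') := by ring
        _ = (g + v) * (g' + v') := by rw [he, he']
        _ = g * g' + (g * v' + v * g' + v * v') := by ring

lemma ideal_fg {R : Type*} [CommSemiring R]
    (h : ∀ c : RingCon (Polynomial R), ∃ s : Finset (Polynomial R × Polynomial R),
      c = ringConGen (fun a b => (a, b) ∈ s))
    (hinv : ∀ x : R, ∃ y : R, x + y = 0) (I : Ideal R) : I.FG := by
  classical
  choose ν hν using hinv
  have huniq : ∀ x y z : R, x + y = 0 → x + z = 0 → y = z := by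
    intro x y z h1 h2
    calc y = y + (x + z) := by rw [h2, add_zero]
      _ = (x + y) + z := by ring
      _ = z := by rw [h1, zero_add]
  have hν1 : ∀ x : R, ν x = ν 1 * x := by
    intro x
    refine huniq x _ _ (hν x) ?_
    calc x + ν 1 * x = (1 + ν 1) * x := by ring
      _ = 0 := by rw [hν 1, zero_mul]
  have hν0 : ν (0 : R) = 0 := by rw [hν1, mul_zero]
  have hνadd : ∀ x y : R, ν (x + y) = ν x + ν y := by
    intro x y; rw [hν1 (x + y), hν1 x, hν1 y]; ring
  have hνν : ∀ x : R, ν (ν x) = x := by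
    intro x
    exact huniq (ν x) _ _ (hν (ν x)) (by rw [add_comm]; exact hν x)
  have hcancel : ∀ c x y : R, c + x = c + y → x = y := by
    intro c x y hcxy
    calc x = (c + ν c) + x := by rw [hν c, zero_add]
      _ = ν c + (c + x) := by ring
      _ = ν c + (c + y) := by rw [hcxy]
      _ = (c + ν c) + y := by ring
      _ = y := by rw [hν c, zero_add]
  obtain ⟨s, hs⟩ := h (idealCon I)
  set G : Finset R := s.biUnion
    (fun p => (p.1.support ∪ p.2.support).image (fun n => p.1.coeff n + ν (p.2.coeff n))) with hG
  set J : Ideal R := Ideal.span (G : Set R) with hJ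
  have hJI : J ≤ I := by
    rw [hJ, Ideal.span_le]
    intro x hx
    rw [Finset.coe_biUnion] at hx
    simp only [Set.mem_iUnion, Finset.mem_coe, Finset.mem_image] at hx
    obtain ⟨p, hp, n, hn, rfl⟩ := hx
    have hrel : (idealCon I) p.1 p.2 := by
      rw [hs]; exact RingConGen.Rel.of _ _ hp
    obtain ⟨u, v, hu, hv, he⟩ := hrel
    have hc : p.1.coeff n + u.coeff n = p.2.coeff n + v.coeff n := by
      have := congrArg (fun q => Polynomial.coeff q n) he
      simpa [Polynomial.coeff_add] using this
    have hkey : p.1.coeff n + ν (p.2.coeff n) = v.coeff n + ν (u.coeff n) := by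
      apply hcancel (p.2.coeff n + u.coeff n)
      calc p.2.coeff n + u.coeff n + (p.1.coeff n + ν (p.2.coeff n))
          = (p.1.coeff n + u.coeff n) + (p.2.coeff n + ν (p.2.coeff n)) := by ring
        _ = p.1.coeff n + u.coeff n := by rw [hν, add_zero]
        _ = p.2.coeff n + v.coeff n := hc
        _ = (p.2.coeff n + u.coeff n) + (v.coeff n + ν (u.coeff n)) := by
            rw [show (p.2.coeff n + u.coeff n) + (v.coeff n + ν (u.coeff n))
              = (p.2.coeff n + v.coeff n) + (u.coeff n + ν (u.coeff n)) from by ring, hν, add_zero]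
    rw [hkey]
    exact I.add_mem (hv n) (by rw [hν1]; exact I.mul_mem_left _ (hu n))
  have hD : ∀ f g : Polynomial R, RingConGen.Rel (fun a b => (a, b) ∈ s) f g →
      ∀ n, f.coeff n + ν (g.coeff n) ∈ J := by
    intro f g hfg
    induction hfg with
    | of x y hxy =>
      intro n
      by_cases hn : n ∈ x.support ∪ y.support
      · apply Ideal.subset_span
        rw [hG, Finset.coe_biUnion]
        simp only [Set.mem_iUnion, Finset.mem_coe, Finset.mem_image]
        exact ⟨(x, y), hxy, n, hn, rfl⟩
      · rw [Finset.mem_union] at hn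
        push_neg at hn
        rw [Polynomial.notMem_support_iff.1 hn.1, Polynomial.notMem_support_iff.1 hn.2,
          hν0, add_zero]
        exact J.zero_mem
    | refl x =>
      intro n
      rw [hν]
      exact J.zero_mem
    | symm _ ih =>
      intro n
      rename_i x y _
      have hmem := ih n
      have e : ν (x.coeff n + ν (y.coeff n)) ∈ J := by
        rw [hν1 (x.coeff n + ν (y.coeff n))]
        exact J.mul_mem_left _ hmem
      rw [hνadd, hνν] at e
      rwa [add_comm] at e
    | trans _ _ ih1 ih2 =>
      intro n
      rename_i x y z _ _
      have e : (x.coeff n + ν (y.coeff n)) + (y.coeff n + ν (z.coeff n))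
          = x.coeff n + ν (z.coeff n) := by
        rw [show (x.coeff n + ν (y.coeff n)) + (y.coeff n + ν (z.coeff n))
          = (x.coeff n + ν (z.coeff n)) + (y.coeff n + ν (y.coeff n)) from by ring, hν, add_zero]
      rw [← e]
      exact J.add_mem (ih1 n) (ih2 n)
    | add _ _ ih1 ih2 =>
      intro n
      rename_i w x y z _ _
      rw [Polynomial.coeff_add, Polynomial.coeff_add, hνadd,
        show w.coeff n + y.coeff n + (ν (x.coeff n) + ν (z.coeff n))
          = (w.coeff n + ν (x.coeff n)) + (y.coeff n + ν (z.coeff n)) from by ring]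
      exact J.add_mem (ih1 n) (ih2 n)
    | mul _ _ ih1 ih2 =>
      intro n
      rename_i w x y z _ _
      rw [Polynomial.coeff_mul, Polynomial.coeff_mul, hν1, Finset.mul_sum,
        ← Finset.sum_add_distrib]
      apply Submodule.sum_mem
      intro p _
      have e : w.coeff p.1 * (y.coeff p.2 + ν 1 * z.coeff p.2)
            + (w.coeff p.1 + ν 1 * x.coeff p.1) * z.coeff p.2
          = w.coeff p.1 * y.coeff p.2 + ν 1 * (x.coeff p.1 * z.coeff p.2)
            + (w.coeff p.1 * z.coeff p.2) * (1 + ν 1) := by ring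
      rw [hν 1, mul_zero, add_zero] at e
      rw [← e]
      refine J.add_mem ?_ ?_
      · refine J.mul_mem_left _ ?_
        have := ih2 p.2
        rwa [hν1 (z.coeff p.2)] at this
      · refine Ideal.mul_mem_right _ _ ?_
        have := ih1 p.1
        rwa [hν1 (x.coeff p.1)] at this
  refine ⟨G, le_antisymm ?_ ?_⟩
  · exact hJI
  · intro a ha
    have hrel : (idealCon I) (Polynomial.C a) 0 := by
      refine ⟨0, Polynomial.C a, ?_, ?_, by rw [add_zero, zero_add]⟩
      · intro n; simp [I.zero_mem]
      · intro n
        rw [Polynomial.coeff_C]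
        split_ifs
        · exact ha
        · exact I.zero_mem
    rw [hs] at hrel
    have := hD _ _ hrel 0
    rwa [Polynomial.coeff_C_zero, Polynomial.coeff_zero, hν0, add_zero] at this

end Stmt12

/-- If the polynomial semiring `R[X]` over a commutative semiring `R` is
c-Noetherian, then `R` is a ring, and moreover a Noetherian ring. -/
theorem stmt_12 {R : Type*} [CommSemiring R]
    (h : ∀ c : RingCon (Polynomial R), ∃ s : Finset (Polynomial R × Polynomial R),
      c = ringConGen (fun a b => (a, b) ∈ s)) :
    (∀ x : R, ∃ y : R, x + y = 0) ∧ (∀ I : Ideal R, I.FG) := by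
  classical
  have key : ∃ u : R, 1 + u = 0 := by
    by_contra hu
    obtain ⟨φ, hφ⟩ := Stmt12.exists_boolHom hu
    have hsurj : Function.Surjective (Polynomial.mapRingHom φ) := by
      rw [Polynomial.coe_mapRingHom]
      exact Polynomial.map_surjective φ hφ
    exact Stmt12.bool_not_fg (Stmt12.fg_transport (Polynomial.mapRingHom φ) hsurj h)
  have hinv : ∀ x : R, ∃ y : R, x + y = 0 := by
    obtain ⟨u, hu⟩ := key
    intro x
    refine ⟨u * x, ?_⟩
    calc x + u * x = (1 + u) * x := by ring
      _ = 0 := by rw [hu, zero_mul]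
  exact ⟨hinv, fun I => Stmt12.ideal_fg h hinv I⟩
end

section
/- Let R be a commutative semiring. If R does not admit the Boolean semifield B as a quotient (i.e., there is no surjective semiring homomorphism R → B), then R is a ring (every element of R has an additive inverse). -/
/-- A "strong ideal": an ideal of a semiring closed under taking summands. -/
def IsStrongIdeal {R : Type*} [CommSemiring R] (I : Set R) : Prop :=
  0 ∈ I ∧ (∀ x y, x ∈ I → y ∈ I → x + y ∈ I) ∧
    (∀ r x, x ∈ I → r * x ∈ I) ∧ (∀ x y, x + y ∈ I → x ∈ I)

/-- The strong ideal generated by a strong ideal and one extra element. -/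
lemma strongIdeal_span {R : Type*} [CommSemiring R] {I : Set R}
    (hI : IsStrongIdeal I) (a : R) :
    IsStrongIdeal {x : R | ∃ t r i, i ∈ I ∧ x + t = i + r * a} := by
  obtain ⟨h0, hadd, hmul, hstr⟩ := hI
  refine ⟨⟨0, 0, 0, h0, by ring⟩, ?_, ?_, ?_⟩
  · rintro x y ⟨t, r, i, hi, hx⟩ ⟨t', r', i', hi', hy⟩
    refine ⟨t + t', r + r', i + i', hadd _ _ hi hi', ?_⟩
    have : (x + t) + (y + t') = (i + r * a) + (i' + r' * a) := by rw [hx, hy]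
    calc x + y + (t + t') = (x + t) + (y + t') := by ring
      _ = (i + r * a) + (i' + r' * a) := this
      _ = (i + i') + (r + r') * a := by ring
  · rintro s x ⟨t, r, i, hi, hx⟩
    refine ⟨s * t, s * r, s * i, hmul _ _ hi, ?_⟩
    calc s * x + s * t = s * (x + t) := by ring
      _ = s * (i + r * a) := by rw [hx]
      _ = s * i + s * r * a := by ring
  · rintro x y ⟨t, r, i, hi, hxy⟩
    exact ⟨y + t, r, i, hi, by rw [← add_assoc, hxy]⟩

theorem exists_one_add_eq_zero {R : Type*} [CommSemiring R]
    (h : ¬ ∃ f : R →+* BoolSemifield, Function.Surjective f) :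
    ∃ y : R, 1 + y = 0 := by
  by_contra h1
  push_neg at h1
  apply h
  -- The set of additively invertible elements is a strong ideal not containing 1.
  set V : Set R := {x | ∃ y, x + y = 0} with hV
  have hVstrong : IsStrongIdeal V := by
    refine ⟨⟨0, by ring⟩, ?_, ?_, ?_⟩
    · rintro x y ⟨x', hx⟩ ⟨y', hy⟩
      exact ⟨x' + y', by rw [show x + y + (x' + y') = (x + x') + (y + y') by ring, hx, hy, add_zero]⟩
    · rintro r x ⟨x', hx⟩
      exact ⟨r * x', by rw [← mul_add, hx, mul_zero]⟩
    · rintro x y ⟨z, hz⟩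
      exact ⟨y + z, by rw [← add_assoc, hz]⟩
  have hV1 : (1 : R) ∉ V := fun ⟨y, hy⟩ => h1 y hy
  -- Zorn's lemma: a maximal strong ideal avoiding 1.
  obtain ⟨P, -, hPS, hPmax⟩ := zorn_subset_nonempty
      {I : Set R | IsStrongIdeal I ∧ (1 : R) ∉ I}
      (fun c hc hchain ⟨I₀, hI₀⟩ => by
        refine ⟨⋃₀ c, ⟨⟨Set.mem_sUnion.2 ⟨I₀, hI₀, (hc hI₀).1.1⟩, ?_, ?_, ?_⟩, ?_⟩,
          fun s hs => Set.subset_sUnion_of_mem hs⟩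
        · rintro x y ⟨I, hI, hx⟩ ⟨J, hJ, hy⟩
          rcases hchain.total hI hJ with hIJ | hJI
          · exact ⟨J, hJ, (hc hJ).1.2.1 _ _ (hIJ hx) hy⟩
          · exact ⟨I, hI, (hc hI).1.2.1 _ _ hx (hJI hy)⟩
        · rintro r x ⟨I, hI, hx⟩
          exact ⟨I, hI, (hc hI).1.2.2.1 _ _ hx⟩
        · rintro x y ⟨I, hI, hxy⟩
          exact ⟨I, hI, (hc hI).1.2.2.2 _ _ hxy⟩
        · rintro ⟨I, hI, h1I⟩
          exact (hc hI).2 h1I)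
      V ⟨hVstrong, hV1⟩
  obtain ⟨⟨hP0, hPadd, hPmul, hPstr⟩, hP1⟩ := hPS
  -- Key: if a ∉ P then 1 ∈ strong span of P and a.
  have key : ∀ a : R, a ∉ P → ∃ t r p, p ∈ P ∧ 1 + t = p + r * a := by
    intro a ha
    by_contra hcon
    push_neg at hcon
    have hsub : P ⊆ {x : R | ∃ t r i, i ∈ P ∧ x + t = i + r * a} :=
      fun x hx => ⟨0, 0, x, hx, by ring⟩
    have hle : {x : R | ∃ t r i, i ∈ P ∧ x + t = i + r * a} ⊆ P :=
      hPmax ⟨strongIdeal_span ⟨hP0, hPadd, hPmul, hPstr⟩ a, by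
        rintro ⟨t, r, p, hp, ht⟩; exact hcon t r p hp ht⟩ hsub
    exact ha (hle ⟨0, 1, 0, hP0, by ring⟩)
  -- P is prime: xy ∈ P → x ∈ P ∨ y ∈ P.
  have hprime : ∀ x y : R, x * y ∈ P → x ∈ P ∨ y ∈ P := by
    intro x y hxy
    by_contra hcon
    push_neg at hcon
    obtain ⟨t, r, p, hp, ht⟩ := key x hcon.1
    obtain ⟨t', r', p', hp', ht'⟩ := key y hcon.2
    have hmain : 1 + (t + t' + t * t') ∈ P := by
      have : (1 + t) * (1 + t') = (p + r * x) * (p' + r' * y) := by rw [ht, ht']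
      have heq : 1 + (t + t' + t * t')
          = p * p' + p * (r' * y) + (r * x) * p' + (r * r') * (x * y) := by
        calc 1 + (t + t' + t * t') = (1 + t) * (1 + t') := by ring
          _ = (p + r * x) * (p' + r' * y) := this
          _ = p * p' + p * (r' * y) + (r * x) * p' + (r * r') * (x * y) := by ring
      rw [heq]
      refine hPadd _ _ (hPadd _ _ (hPadd _ _ (hPmul _ _ hp') ?_) (hPmul _ _ hp'))
        (hPmul _ _ hxy)
      rw [mul_comm]; exact hPmul _ _ hp
    exact hP1 (hPstr _ _ hmain)
  -- Build the homomorphism to B.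
  classical
  refine ⟨{ toFun := fun x => if x ∈ P then (0 : BoolSemifield) else 1
            map_one' := by simp [hP1]
            map_zero' := by simp [hP0]
            map_mul' := ?_
            map_add' := ?_ }, ?_⟩
  · intro x y
    by_cases hx : x ∈ P
    · have hxy : x * y ∈ P := by rw [mul_comm]; exact hPmul _ _ hx
      simp [hx, hxy]
    · by_cases hy : y ∈ P
      · have hxy : x * y ∈ P := hPmul _ _ hy
        simp [hx, hy, hxy]
      · have hxy : x * y ∉ P := fun hc => (hprime x y hc).elim hx hy
        simp [hx, hy, hxy]
  · intro x y
    by_cases hx : x ∈ P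
    · by_cases hy : y ∈ P
      · have hxy : x + y ∈ P := hPadd _ _ hx hy
        simp [hx, hy, hxy]
      · have hxy : x + y ∉ P := fun hc => hy (hPstr y x (by rwa [add_comm] at hc))
        simp [hx, hy, hxy]
    · have hxy : x + y ∉ P := fun hc => hx (hPstr x y hc)
      by_cases hy : y ∈ P
      · simp [hx, hy, hxy]
      · simp only [if_neg hx, if_neg hy, if_neg hxy]
        decide
  · intro b
    rcases (show b = 0 ∨ b = 1 by revert b; decide) with rfl | rfl
    · exact ⟨0, by simp [hP0]⟩
    · exact ⟨1, by simp [hP1]⟩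

/-- Borger–Grinberg: a commutative semiring which does not admit the Boolean
semifield as a quotient is a ring. -/
theorem stmt_13 {R : Type*} [CommSemiring R]
    (h : ¬ ∃ f : R →+* BoolSemifield, Function.Surjective f) :
    ∀ x : R, ∃ y : R, x + y = 0 := by
  obtain ⟨y, hy⟩ := exists_one_add_eq_zero h
  intro x
  refine ⟨x * y, ?_⟩
  calc x + x * y = x * (1 + y) := by ring
    _ = 0 := by rw [hy, mul_zero]
end

section
/- Let A be a commutative semiring with a congruence ~, and suppose x ~ x + y for some x, y ∈ A. Then for every n ≥ 1, x^n ~ x^n + y^n. -/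
/-- If `~` is a congruence on a commutative semiring `A` and `x ~ x + y`, then
`x^n ~ x^n + y^n` for every `n ≥ 1`. -/
theorem stmt_14 {A : Type*} [CommSemiring A] (c : RingCon A) {x y : A}
    (h : c x (x + y)) : ∀ n : ℕ, 1 ≤ n → c (x ^ n) (x ^ n + y ^ n) := by
  intro n hn
  induction n with
  | zero => omega
  | succ m ih =>
    rcases Nat.eq_or_lt_of_le hn with h1 | h1
    · obtain rfl : m = 0 := by omega
      simpa using h
    · have hm : 1 ≤ m := by omega
      have IH := ih hm
      -- multiply IH by x
      have h2 : c (x ^ (m + 1)) (x ^ (m + 1) + x * y ^ m) := by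
        have := c.mul (c.refl x) IH
        simpa [pow_succ, mul_add, mul_comm] using this
      -- multiply h by y^m
      have h3 : c (x * y ^ m) (x * y ^ m + y ^ (m + 1)) := by
        have := c.mul h (c.refl (y ^ m))
        simpa [pow_succ, add_mul, mul_comm] using this
      have h4 : c (x ^ (m + 1)) (x ^ (m + 1) + (x * y ^ m + y ^ (m + 1))) := by
        have := c.trans h2 (c.add (c.refl (x ^ (m + 1))) h3)
        simpa using this
      have h5 : c (x ^ (m + 1) + y ^ (m + 1)) (x ^ (m + 1) + (x * y ^ m + y ^ (m + 1))) := by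
        have := c.add h2 (c.refl (y ^ (m + 1)))
        simpa [add_assoc, add_comm, add_left_comm] using this
      exact c.trans h4 (c.symm h5)
end

section
/- Let R be a subring of ℝ all of whose elements are algebraic over ℚ (or more generally integral/algebraic over ℤ), let S = R ∩ [0,∞), and let ~ be a congruence on the semiring S that is not the trivial (diagonal) congruence. Then there exist natural numbers n > m > 1 with n ~ m in S. -/
open Polynomial in
private lemma stmt15_aux1 {d : ℝ} (hd : d ≠ 0) :
    ∀ n (p : ℤ[X]), p.natDegree ≤ n → p ≠ 0 → Polynomial.aeval d p = 0 →
      ∃ (q : ℤ[X]) (L : ℕ), 0 < L ∧ d * Polynomial.aeval d q = L := by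
  intro n
  induction n with
  | zero =>
    intro p hdeg hp0 hav
    rw [Polynomial.eq_C_of_natDegree_le_zero hdeg] at hav hp0
    simp at hav
    simp [hav] at hp0
  | succ n ih =>
    intro p hdeg hp0 hav
    have hsplit : (X : ℤ[X]) * p.divX + C (p.coeff 0) = p := Polynomial.X_mul_divX_add p
    have hav' : d * Polynomial.aeval d p.divX + ((p.coeff 0 : ℤ) : ℝ) = 0 := by
      rw [← hsplit] at hav
      simpa using hav
    by_cases h0 : p.coeff 0 = 0
    · have hdvx : Polynomial.aeval d p.divX = 0 := by
        rw [h0] at hav'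
        push_cast at hav'
        have h2 : d * Polynomial.aeval d p.divX = 0 := by linarith
        rcases mul_eq_zero.mp h2 with h | h
        · exact absurd h hd
        · exact h
      have hne : p.divX ≠ 0 := by
        intro h
        rw [h, mul_zero, zero_add, h0, map_zero] at hsplit
        exact hp0 hsplit.symm
      have hdeg' : p.divX.natDegree ≤ n := by
        have := Polynomial.natDegree_divX_eq_natDegree_tsub_one (p := p)
        omega
      exact ih p.divX hdeg' hne hdvx
    · rcases lt_or_gt_of_ne h0 with hneg | hpos
      · refine ⟨p.divX, (p.coeff 0).natAbs, by omega, ?_⟩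
        have : ((p.coeff 0).natAbs : ℝ) = -((p.coeff 0 : ℤ) : ℝ) := by
          rw [Nat.cast_natAbs]; push_cast; rw [abs_of_neg (by exact_mod_cast hneg)]
        rw [this]; linarith
      · refine ⟨-p.divX, (p.coeff 0).natAbs, by omega, ?_⟩
        have : ((p.coeff 0).natAbs : ℝ) = ((p.coeff 0 : ℤ) : ℝ) := by
          rw [Nat.cast_natAbs]; push_cast; rw [abs_of_pos (by exact_mod_cast hpos)]
        rw [this, map_neg]; linarith

open Polynomial in
private lemma stmt15_aux2 (R : Subring ℝ) {d : ℝ} (hdR : d ∈ R) (hd0 : 0 ≤ d) (q : ℤ[X]) :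
    ∃ F G : ℝ, F ∈ R ∧ 0 ≤ F ∧ G ∈ R ∧ 0 ≤ G ∧ Polynomial.aeval d q = F - G := by
  set n := q.natDegree + 1 with hn
  set T : ℝ := ∑ i ∈ Finset.range n, d ^ i with hT
  set N : ℕ := ∑ i ∈ Finset.range n, (q.coeff i).natAbs with hN
  have hTR : T ∈ R := Subring.sum_mem R fun i _ => Subring.pow_mem R hdR i
  have hqR : Polynomial.aeval d q ∈ R := by
    rw [Polynomial.aeval_eq_sum_range]
    exact Subring.sum_mem R fun i _ => Subring.zsmul_mem R (Subring.pow_mem R hdR i) _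
  have hT0 : 0 ≤ T := Finset.sum_nonneg fun i _ => pow_nonneg hd0 i
  have hbound : -((N : ℝ) * T) ≤ Polynomial.aeval d q := by
    rw [Polynomial.aeval_eq_sum_range, hT, Finset.mul_sum, ← Finset.sum_neg_distrib]
    refine Finset.sum_le_sum fun i hi => ?_
    have h1 : ((q.coeff i).natAbs : ℤ) ≤ (N : ℤ) := by
      exact_mod_cast Finset.single_le_sum (f := fun j => (q.coeff j).natAbs)
        (fun j _ => Nat.zero_le _) hi
    have h2 : -(N : ℝ) ≤ (q.coeff i : ℝ) := by
      have : -(N : ℤ) ≤ q.coeff i := by omega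
      exact_mod_cast this
    have h3 : (0:ℝ) ≤ d ^ i := pow_nonneg hd0 i
    calc -((N:ℝ) * d ^ i) = (-(N:ℝ)) * d ^ i := by ring
    _ ≤ (q.coeff i : ℝ) * d ^ i := mul_le_mul_of_nonneg_right h2 h3
    _ = q.coeff i • d ^ i := by simp [zsmul_eq_mul]
  refine ⟨Polynomial.aeval d q + (N : ℝ) * T, (N : ℝ) * T, ?_, by linarith, ?_, ?_, by ring⟩
  · exact Subring.add_mem R hqR (Subring.mul_mem R (natCast_mem R N) hTR)
  · exact Subring.mul_mem R (natCast_mem R N) hTR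
  · positivity

/-- Let `R` be a subring of `ℝ` whose elements are algebraic over `ℚ`, let `S` be
the subsemiring of nonnegative elements of `R`, and let `c` be a non-diagonal
congruence on `S`. Then there are natural numbers `n > m > 1` with `n ~ m`. -/
theorem stmt_15 (R : Subring ℝ) (halg : ∀ x : R, IsAlgebraic ℚ (x : ℝ))
    (S : Subsemiring ℝ) (hS : ∀ x : ℝ, x ∈ S ↔ x ∈ R ∧ 0 ≤ x)
    (c : RingCon S) (hc : ∃ a b : S, c a b ∧ a ≠ b) :
    ∃ n m : ℕ, 1 < m ∧ m < n ∧ c (n : S) (m : S) := by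
  have hSmem : ∀ x : S, (x:ℝ) ∈ R := fun x => ((hS x).mp x.2).1
  -- main step, assuming `a < b`
  have main : ∀ a b : S, c a b → (a:ℝ) < (b:ℝ) →
      ∃ n m : ℕ, 1 < m ∧ m < n ∧ c (n : S) (m : S) := by
    intro a b hab hlt
    set d : ℝ := (b:ℝ) - (a:ℝ) with hdd
    have hd0 : 0 < d := sub_pos.mpr hlt
    have hdR : d ∈ R := Subring.sub_mem _ (hSmem b) (hSmem a)
    -- find an integer polynomial vanishing at d
    obtain ⟨p, hp, hpe⟩ := halg ⟨d, hdR⟩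
    have hpe : Polynomial.aeval d p = 0 := hpe
    set p' : Polynomial ℤ := IsLocalization.integerNormalization (nonZeroDivisors ℤ) p with hp'
    have hp'0 : p' ≠ 0 := fun h => hp (IsFractionRing.integerNormalization_eq_zero_iff.mp h)
    have hp'e : Polynomial.aeval d p' = 0 :=
      IsLocalization.integerNormalization_aeval_eq_zero (nonZeroDivisors ℤ) p hpe
    obtain ⟨q, L, hL, hqL⟩ := stmt15_aux1 (ne_of_gt hd0) p'.natDegree p' le_rfl hp'0 hp'e
    obtain ⟨F, G, hFR, hF0, hGR, hG0, hFG⟩ := stmt15_aux2 R hdR (le_of_lt hd0) q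
    have hdFG : d * F = d * G + (L : ℝ) := by rw [hFG] at hqL; linarith [hqL]
    -- move into S
    let dS : S := ⟨d, (hS d).mpr ⟨hdR, le_of_lt hd0⟩⟩
    let FS : S := ⟨F, (hS F).mpr ⟨hFR, hF0⟩⟩
    let GS : S := ⟨G, (hS G).mpr ⟨hGR, hG0⟩⟩
    have hb : b = a + dS := Subtype.ext (by push_cast [dS]; ring)
    have hab' : c a (a + dS) := hb ▸ hab
    have hdf : dS * FS = dS * GS + (L : S) := Subtype.ext (by push_cast [dS, FS, GS]; exact hdFG)
    have h1 : c (a * FS) (a * FS + (dS * GS + (L : S))) := by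
      have h := c.mul hab' (c.refl FS)
      rwa [add_mul, hdf] at h
    have h2 : c (a * GS) (a * GS + dS * GS) := by
      have h := c.mul hab' (c.refl GS)
      rwa [add_mul] at h
    set B : S := a * FS + a * GS + dS * GS with hB
    have hB1 : c (a * FS + a * GS) (B + (L : S)) := by
      have h := c.add h1 (c.refl (a * GS))
      have e : (a * FS + (dS * GS + (L : S))) + a * GS = B + (L : S) := by rw [hB]; ring
      rwa [e] at h
    have hB2 : c (a * FS + a * GS) B := by
      have h := c.add (c.refl (a * FS)) h2
      have e : a * FS + (a * GS + dS * GS) = B := by rw [hB]; ring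
      rwa [e] at h
    have hkey : c B (B + (L : S)) := c.trans (c.symm hB2) hB1
    -- shift the base point to a natural number
    have coe_nat : ∀ k : ℕ, (((k : ℕ) : S) : ℝ) = k := fun k => map_natCast S.subtype k
    set n0 : ℕ := ⌈(B:ℝ)⌉₊ with hn0
    have hrS : (n0:ℝ) - (B:ℝ) ∈ S := (hS _).mpr
      ⟨Subring.sub_mem _ (natCast_mem R n0) (hSmem B), by linarith [Nat.le_ceil (B:ℝ)]⟩
    let rS : S := ⟨(n0:ℝ) - (B:ℝ), hrS⟩
    have h3 : c (B + rS) (B + (L : S) + rS) := c.add hkey (c.refl rS)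
    have hBr : B + rS = ((n0:ℕ) : S) := Subtype.ext (by push_cast [rS, coe_nat]; ring)
    have h4 : c ((n0 : ℕ) : S) (((n0 + L : ℕ)) : S) := by
      have e1 : B + (L : S) + rS = ((n0 + L : ℕ) : S) := by
        rw [add_right_comm, hBr]; exact Subtype.ext (by push_cast [coe_nat]; ring)
      rwa [hBr, e1] at h3
    have h5 : c ((n0 + 2 : ℕ) : S) ((n0 + L + 2 : ℕ) : S) := by
      have h := c.add h4 (c.refl ((2:ℕ) : S))
      have e1 : ((n0 : ℕ) : S) + ((2:ℕ) : S) = ((n0 + 2 : ℕ) : S) := by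
        exact Subtype.ext (by push_cast [coe_nat]; ring)
      have e2 : ((n0 + L : ℕ) : S) + ((2:ℕ) : S) = ((n0 + L + 2 : ℕ) : S) := by
        exact Subtype.ext (by push_cast [coe_nat]; ring)
      rwa [e1, e2] at h
    exact ⟨n0 + L + 2, n0 + 2, by omega, by omega, c.symm h5⟩
  obtain ⟨a, b, hab, hne⟩ := hc
  have hne' : (a:ℝ) ≠ (b:ℝ) := fun h => hne (Subtype.ext h)
  rcases lt_or_gt_of_ne hne' with h | h
  · exact main a b hab h
  · exact main b a (c.symm hab) h
end

section
/- Let R be a subring of ℝ, S = R_{≥0}, and ~ a congruence on the semiring S. For x ∈ S define I_x = {y ∈ S : y + x ~ x}. Then (a) I_x is a k-ideal of S; (b) x ≤ y implies I_x ⊆ I_y; (c) if I_t ≠ {0} then I_x = I_t for every x ≥ t. -/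
/-- Let `R` be a subring of `ℝ`, `S = R_{≥0}` and `c` a congruence on `S`. For
`x ∈ S` set `I x = {y : y + x ~ x}`. Then (a) each `I x` is a k-ideal of `S`;
(b) `x ≤ y` implies `I x ⊆ I y`; (c) if `I t ≠ {0}` then `I x = I t` for `x ≥ t`. -/
theorem stmt_16 (R : Subring ℝ) (S : Subsemiring ℝ)
    (hS : ∀ x : ℝ, x ∈ S ↔ x ∈ R ∧ 0 ≤ x) (c : RingCon S) :
    let I : S → Set S := fun x => {y : S | c (y + x) x}
    (∀ x : S,
      (0 ∈ I x) ∧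
      (∀ a b : S, a ∈ I x → b ∈ I x → a + b ∈ I x) ∧
      (∀ a : S, a ∈ I x → ∀ r : S, r * a ∈ I x) ∧
      (∀ a b : S, a ∈ I x → a + b ∈ I x → b ∈ I x)) ∧
    (∀ x y : S, (x : ℝ) ≤ (y : ℝ) → I x ⊆ I y) ∧
    (∀ t x : S, I t ≠ {0} → (t : ℝ) ≤ (x : ℝ) → I x = I t) := by
  intro I
  have hmem : ∀ z : S, (z : ℝ) ∈ R ∧ 0 ≤ (z : ℝ) := fun z => (hS z).mp z.2
  -- zero membership
  have hzero : ∀ x : S, (0 : S) ∈ I x := by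
    intro x
    show c (0 + x) x
    rw [zero_add]
    exact c.refl x
  -- additive closure
  have hadd : ∀ x a b : S, a ∈ I x → b ∈ I x → a + b ∈ I x := by
    intro x a b ha hb
    show c (a + b + x) x
    have h1 : c (a + (b + x)) (a + x) := c.add (c.refl a) hb
    have e : a + b + x = a + (b + x) := by ring
    rw [e]
    exact c.trans h1 ha
  -- natural scalar multiples
  have hsmul : ∀ x a : S, a ∈ I x → ∀ n : ℕ, c ((n • a : S) + x) x := by
    intro x a ha n
    induction n with
    | zero => simpa using c.refl x
    | succ n ih =>
      have h1 : c (a + (n • a + x)) (a + x) := c.add (c.refl a) ih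
      have e : ((n + 1) • a : S) + x = a + (n • a + x) := by
        rw [succ_nsmul]; ring
      rw [e]
      exact c.trans h1 ha
  -- scalars at most 1
  have hle1 : ∀ x a : S, a ∈ I x → ∀ r : S, (r : ℝ) ≤ 1 → r * a ∈ I x := by
    intro x a ha r hr
    have hsS : ((1 : ℝ) - (r : ℝ)) ∈ S :=
      (hS _).mpr ⟨sub_mem R.one_mem (hmem r).1, sub_nonneg.mpr hr⟩
    set s : S := ⟨(1 : ℝ) - (r : ℝ), hsS⟩ with hs
    have hrs : r + s = 1 := Subtype.ext (by simp [hs])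
    have h1 : c (r * a + r * x) (r * x) := by
      have := c.mul (c.refl r) ha
      rwa [mul_add] at this
    have h2 : c (r * a + r * x + s * x) (r * x + s * x) := c.add h1 (c.refl (s * x))
    have e1 : r * a + r * x + s * x = r * a + x := by
      rw [add_assoc, ← add_mul, hrs, one_mul]
    have e2 : r * x + s * x = x := by rw [← add_mul, hrs, one_mul]
    rw [e1, e2] at h2
    exact h2
  -- full multiplicative closure
  have hmul : ∀ x a : S, a ∈ I x → ∀ r : S, r * a ∈ I x := by
    intro x a ha r
    set n : ℕ := ⌊(r : ℝ)⌋₊ with hn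
    have hnr : (n : ℝ) ≤ (r : ℝ) := Nat.floor_le (hmem r).2
    have hnR : ((n : ℕ) : ℝ) ∈ R := by exact_mod_cast natCast_mem R n
    have hfS : ((r : ℝ) - (n : ℝ)) ∈ S :=
      (hS _).mpr ⟨sub_mem (hmem r).1 hnR, sub_nonneg.mpr hnr⟩
    set f : S := ⟨(r : ℝ) - (n : ℝ), hfS⟩ with hf
    have hf1 : (f : ℝ) ≤ 1 := by
      have h := Nat.lt_floor_add_one (r : ℝ)
      show (r : ℝ) - (n : ℝ) ≤ 1
      rw [hn]
      linarith
    have hr : r * a = n • a + f * a := by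
      apply Subtype.ext
      push_cast
      simp [hf]
      ring
    rw [hr]
    exact hadd x _ _ (hsmul x a ha n) (hle1 x a ha f hf1)
  -- k-ideal property
  have hk : ∀ x a b : S, a ∈ I x → a + b ∈ I x → b ∈ I x := by
    intro x a b ha hab
    have h1 : c (b + x) (b + (a + x)) := c.add (c.refl b) (c.symm ha)
    have h2 : c (b + (a + x)) x := by
      have e : b + (a + x) = a + b + x := by ring
      rw [e]; exact hab
    exact c.trans h1 h2
  -- part (b)
  have hB : ∀ x y : S, (x : ℝ) ≤ (y : ℝ) → I x ⊆ I y := by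
    intro x y hxy z hz
    have hdS : ((y : ℝ) - (x : ℝ)) ∈ S :=
      (hS _).mpr ⟨sub_mem (hmem y).1 (hmem x).1, sub_nonneg.mpr hxy⟩
    set d : S := ⟨(y : ℝ) - (x : ℝ), hdS⟩ with hd
    have hy : y = x + d := Subtype.ext (by simp [hd])
    show c (z + y) y
    have h1 : c (z + x + d) (x + d) := c.add hz (c.refl d)
    have e : z + y = z + x + d := by rw [hy]; ring
    rw [e, hy]
    exact h1
  refine ⟨fun x => ⟨hzero x, hadd x, fun a ha r => hmul x a ha r, hk x⟩, hB, ?_⟩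
  -- part (c)
  intro t x hne hle
  obtain ⟨a, haI, ha0⟩ : ∃ a, a ∈ I t ∧ a ≠ 0 := by
    by_contra h
    push_neg at h
    apply hne
    ext z
    simp only [Set.mem_singleton_iff]
    exact ⟨fun hz => h z hz, fun hz => hz ▸ hzero t⟩
  have hane : (a : ℝ) ≠ 0 := fun h => ha0 (Subtype.ext h)
  have hapos : 0 < (a : ℝ) := lt_of_le_of_ne (hmem a).2 (Ne.symm hane)
  obtain ⟨n, hn⟩ := exists_nat_ge (((x : ℝ) - (t : ℝ)) / (a : ℝ))
  have hxa : (x : ℝ) - (t : ℝ) ≤ (n : ℝ) * (a : ℝ) := by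
    rw [div_le_iff₀ hapos] at hn
    linarith
  set u : S := t + n • a with hu
  have hucoe : (u : ℝ) = (t : ℝ) + (n : ℝ) * (a : ℝ) := by
    rw [hu]
    push_cast
    ring
  have hxu : (x : ℝ) ≤ (u : ℝ) := by rw [hucoe]; linarith
  have hut : c u t := by
    have := hsmul t a haI n
    have e : u = n • a + t := by rw [hu]; ring
    rw [e]
    exact this
  apply Set.Subset.antisymm
  · intro z hz
    have hzu : z ∈ I u := hB x u hxu hz
    show c (z + t) t
    exact c.trans (c.add (c.refl z) (c.symm hut)) (c.trans hzu hut)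
  · exact hB t x hle
end

section
/- Let S be a cancellative commutative semiring, R = S ⊗_ℕ ℤ its Grothendieck ring, and M an S-module generated by n elements m₁, ..., m_n. If the base change M ⊗_S R is a free R-module of rank n with basis the images of m₁, ..., m_n, then M is a free S-module with basis m₁, ..., m_n. -/
open scoped TensorProduct

/-- Let `S` be a cancellative commutative semiring, `R` its Grothendieck ring
(`S` embeds in `R` and every element of `R` is a difference of elements of `S`),
and `M` an `S`-module generated by `m₁, …, mₙ`. If the base change `R ⊗[S] M` is
free over `R` on the images `1 ⊗ mᵢ`, then `M` is free over `S` on the `mᵢ`. -/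
theorem stmt_17 {S R M : Type*} [CommSemiring S] [CommRing R] [Algebra S R]
    [AddCommMonoid M] [Module S M]
    (hcancel : ∀ a b c : S, a + b = a + c → b = c)
    (hinj : Function.Injective (algebraMap S R))
    (hgroth : ∀ r : R, ∃ a b : S, r = algebraMap S R a - algebraMap S R b)
    {n : ℕ} (m : Fin n → M)
    (hgen : ∀ x : M, ∃ co : Fin n → S, x = ∑ i, co i • m i)
    (hfree : Function.Bijective fun co : Fin n → R =>
      ∑ i, co i • ((1 : R) ⊗ₜ[S] m i : R ⊗[S] M)) :
    Function.Bijective fun co : Fin n → S => ∑ i, co i • m i := by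
  constructor
  · intro co co' h
    simp only at h
    have key : ∀ c : Fin n → S, (1 : R) ⊗ₜ[S] (∑ i, c i • m i) =
        ∑ i, (algebraMap S R (c i)) • ((1 : R) ⊗ₜ[S] m i : R ⊗[S] M) := by
      intro c
      rw [TensorProduct.tmul_sum]
      refine Finset.sum_congr rfl fun i _ => ?_
      rw [TensorProduct.tmul_smul, algebraMap_smul]
    have := hfree.1 (a₁ := fun i => algebraMap S R (co i))
      (a₂ := fun i => algebraMap S R (co' i)) (by
        simp only
        rw [← key, ← key, h])
    funext i
    exact hinj (congrFun this i)
  · intro x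
    obtain ⟨co, hco⟩ := hgen x
    exact ⟨co, hco.symm⟩
end
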